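/- arXiv:2402.17631 — 10 statements merged into one kernel-verified Lean document; each statement's English description precedes it below -/
import Mathlib

section
/- At least half (rounded down) of the elements lie in gaps of size at least Δ; precisely, 2·∑_{j : Δ_j ≥ Δ} Δ_j ≥ N + 1, equivalently ∑_{j : Δ_j ≥ Δ} Δ_j ≥ ⌊N/2⌋ + 1. -/
/-- At least half (rounded down) of the elements lie in gaps of size at
least `Δ`; precisely, `2·∑_{j : Δ j ≥ Δ} Δ j ≥ N + 1`, equivalently
`∑_{j : Δ j ≥ Δ} Δ j ≥ ⌊N/2⌋ + 1`. -/
theorem statement2 (N q : ℕ) (hN : 1 ≤ N) (hq : 1 ≤ q)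
    (r : ℕ → ℕ) (hr0 : r 0 = 0) (hrq : r (q + 1) = N + 1)
    (hmono : ∀ i, i ≤ q → r i < r (i + 1))
    (Δ : ℕ)
    (hΔmem : ∃ i ∈ Finset.Icc 1 (q + 1), r i - r (i - 1) = Δ)
    (hΔge : N + 2 ≤ 2 * ∑ j ∈ (Finset.Icc 1 (q + 1)).filter
        (fun j => r j - r (j - 1) ≤ Δ), (r j - r (j - 1)))
    (hΔmin : ∀ i ∈ Finset.Icc 1 (q + 1),
        N + 2 ≤ 2 * ∑ j ∈ (Finset.Icc 1 (q + 1)).filter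
            (fun j => r j - r (j - 1) ≤ r i - r (i - 1)), (r j - r (j - 1)) →
        Δ ≤ r i - r (i - 1)) :
    N + 1 ≤ 2 * ∑ j ∈ (Finset.Icc 1 (q + 1)).filter
        (fun j => Δ ≤ r j - r (j - 1)), (r j - r (j - 1))
    ∧ N / 2 + 1 ≤ ∑ j ∈ (Finset.Icc 1 (q + 1)).filter
        (fun j => Δ ≤ r j - r (j - 1)), (r j - r (j - 1)) := by
  -- monotonicity of r on [0, q+1]
  have hmono' : ∀ j, j ≤ q + 1 → ∀ i, i ≤ j → r i ≤ r j := by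
    intro j
    induction j with
    | zero => intro _ i hi; obtain rfl := Nat.le_zero.mp hi; exact le_rfl
    | succ n ih =>
      intro hj i hi
      rcases Nat.eq_or_lt_of_le hi with rfl | h
      · exact le_rfl
      · exact le_trans (ih (by omega) i (by omega)) (hmono n (by omega)).le
  -- telescoping sum
  have tele : ∀ m, m ≤ q + 1 →
      ∑ j ∈ Finset.Icc 1 m, (r j - r (j - 1)) = r m - r 0 := by
    intro m hm
    induction m with
    | zero => simp
    | succ n ih =>
      rw [Finset.sum_Icc_succ_top (by omega), ih (by omega)]
      have h1 : r n ≤ r (n + 1) := (hmono n (by omega)).le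
      have h2 : r 0 ≤ r n := hmono' n (by omega) 0 (by omega)
      simp only [Nat.add_sub_cancel]
      omega
  have total : ∑ j ∈ Finset.Icc 1 (q + 1), (r j - r (j - 1)) = N + 1 := by
    rw [tele (q + 1) le_rfl, hr0, hrq]; omega
  have hsplit := Finset.sum_filter_add_sum_filter_not (Finset.Icc 1 (q + 1))
      (fun j => Δ ≤ r j - r (j - 1)) (fun j => r j - r (j - 1))
  set S := ∑ j ∈ (Finset.Icc 1 (q + 1)).filter
      (fun j => Δ ≤ r j - r (j - 1)), (r j - r (j - 1)) with hS
  set T := (Finset.Icc 1 (q + 1)).filter (fun j => ¬ Δ ≤ r j - r (j - 1)) with hT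
  set L := ∑ j ∈ T, (r j - r (j - 1)) with hL
  rw [total] at hsplit
  -- key claim: 2 * L ≤ N + 1
  have hkey : 2 * L ≤ N + 1 := by
    by_contra hcon
    have hcon' : N + 2 ≤ 2 * L := by omega
    have hTne : T.Nonempty := by
      by_contra hne
      rw [Finset.not_nonempty_iff_eq_empty] at hne
      rw [hL, hne, Finset.sum_empty] at hcon'
      omega
    obtain ⟨i, hiT, hmax⟩ := Finset.exists_max_image T (fun j => r j - r (j - 1)) hTne
    have hiIcc : i ∈ Finset.Icc 1 (q + 1) := (Finset.mem_filter.mp hiT).1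
    have hilt : r i - r (i - 1) < Δ := by
      have := (Finset.mem_filter.mp hiT).2; omega
    have heq : (Finset.Icc 1 (q + 1)).filter
        (fun j => r j - r (j - 1) ≤ r i - r (i - 1)) = T := by
      ext j
      simp only [hT, Finset.mem_filter, not_le]
      constructor
      · rintro ⟨hj, hle⟩; exact ⟨hj, by omega⟩
      · rintro ⟨hj, hlt⟩
        refine ⟨hj, hmax j ?_⟩
        rw [hT, Finset.mem_filter]
        exact ⟨hj, by omega⟩
    have := hΔmin i hiIcc (by rw [heq, ← hL]; omega)
    omega
  constructor <;> omega
end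

section
/- In the non-sorting case, the comparison potential released by one partitioning round is at least (N/2)·log₂(N/Δ) + N/2; precisely, if Δ ≤ N then (∑_{i : Δ_i ≤ Δ} Δ_i)·log₂(N/Δ) + ∑_{i : Δ_i ≥ Δ} Δ_i ≥ (N/2)·log₂(N/Δ) + N/2. -/
/-- In the non-sorting case, the comparison potential released by one
partitioning round is at least `(N/2)·log₂(N/Δ) + N/2`; precisely, if `Δ ≤ N` then
`(∑_{i : Δ i ≤ Δ} Δ i)·log₂(N/Δ) + ∑_{i : Δ i ≥ Δ} Δ i ≥ (N/2)·log₂(N/Δ) + N/2`.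
Here the gaps are `Δ i = r i − r (i−1)` and `Δ` is the smallest element of
`{Δ 1, …, Δ (q+1)}` satisfying `2·∑_{j : Δ j ≤ Δ} Δ j ≥ N + 2`. -/
theorem statement7 (N q : ℕ) (hN : 1 ≤ N) (hq : 1 ≤ q)
    (r : ℕ → ℕ) (hr0 : r 0 = 0) (hrq : r (q + 1) = N + 1)
    (hmono : ∀ i, i ≤ q → r i < r (i + 1))
    (Δ : ℕ)
    (hΔmem : ∃ i ∈ Finset.Icc 1 (q + 1), r i - r (i - 1) = Δ)
    (hΔge : N + 2 ≤ 2 * ∑ j ∈ (Finset.Icc 1 (q + 1)).filter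
        (fun j => r j - r (j - 1) ≤ Δ), (r j - r (j - 1)))
    (hΔmin : ∀ i ∈ Finset.Icc 1 (q + 1),
        N + 2 ≤ 2 * ∑ j ∈ (Finset.Icc 1 (q + 1)).filter
            (fun j => r j - r (j - 1) ≤ r i - r (i - 1)), (r j - r (j - 1)) →
        Δ ≤ r i - r (i - 1))
    (hΔN : Δ ≤ N) :
    (N : ℝ) / 2 * Real.logb 2 ((N : ℝ) / (Δ : ℝ)) + (N : ℝ) / 2 ≤
      ((∑ i ∈ (Finset.Icc 1 (q + 1)).filter
          (fun i => r i - r (i - 1) ≤ Δ), (r i - r (i - 1)) : ℕ) : ℝ)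
        * Real.logb 2 ((N : ℝ) / (Δ : ℝ))
      + ((∑ i ∈ (Finset.Icc 1 (q + 1)).filter
          (fun i => Δ ≤ r i - r (i - 1)), (r i - r (i - 1)) : ℕ) : ℝ) := by
  -- Δ ≥ 1
  have hΔpos : 1 ≤ Δ := by
    obtain ⟨i, hi, hieq⟩ := hΔmem
    simp only [Finset.mem_Icc] at hi
    have h1 : i - 1 + 1 = i := by omega
    have := hmono (i - 1) (by omega)
    rw [h1] at this
    omega
  -- partial sums of gaps
  have hpart : ∀ n, n ≤ q + 1 → ∑ j ∈ Finset.range n, (r (j + 1) - r j) = r n := by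
    intro n hn
    induction n with
    | zero => simp [hr0]
    | succ m ih =>
      rw [Finset.sum_range_succ, ih (by omega)]
      have := hmono m (by omega)
      omega
  -- total sum of gaps is N + 1
  have htot : ∑ i ∈ Finset.Icc 1 (q + 1), (r i - r (i - 1)) = N + 1 := by
    have himg : Finset.Icc 1 (q + 1) = Finset.image (· + 1) (Finset.range (q + 1)) := by
      ext x
      simp only [Finset.mem_Icc, Finset.mem_image, Finset.mem_range]
      constructor
      · intro h; exact ⟨x - 1, by omega, by omega⟩
      · rintro ⟨y, hy, rfl⟩; omega
    rw [himg, Finset.sum_image (by intro a _ b _ h; exact Nat.add_right_cancel h)]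
    have : ∑ j ∈ Finset.range (q + 1), (r (j + 1) - r (j + 1 - 1))
        = ∑ j ∈ Finset.range (q + 1), (r (j + 1) - r j) := by
      apply Finset.sum_congr rfl
      intro j _
      congr 1
    rw [this, hpart (q + 1) le_rfl, hrq]
  -- the sum of gaps strictly smaller than Δ is at most (N+1)/2
  have hsmallstrict : 2 * ∑ j ∈ (Finset.Icc 1 (q + 1)).filter
      (fun j => r j - r (j - 1) < Δ), (r j - r (j - 1)) ≤ N + 1 := by
    by_contra hcon
    push_neg at hcon
    set A := (Finset.Icc 1 (q + 1)).filter (fun j => r j - r (j - 1) < Δ) with hA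
    have hAne : A.Nonempty := by
      rcases Finset.eq_empty_or_nonempty A with h | h
      · rw [h] at hcon; simp at hcon
      · exact h
    obtain ⟨i₀, hi₀A, hi₀max⟩ := A.exists_max_image (fun j => r j - r (j - 1)) hAne
    have hi₀Ic : i₀ ∈ Finset.Icc 1 (q + 1) := (Finset.mem_filter.mp hi₀A).1
    have hi₀lt : r i₀ - r (i₀ - 1) < Δ := (Finset.mem_filter.mp hi₀A).2
    have hsub : A ⊆ (Finset.Icc 1 (q + 1)).filter
        (fun j => r j - r (j - 1) ≤ r i₀ - r (i₀ - 1)) := by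
      intro j hj
      rw [Finset.mem_filter]
      exact ⟨(Finset.mem_filter.mp hj).1, hi₀max j hj⟩
    have hle : ∑ j ∈ A, (r j - r (j - 1)) ≤ ∑ j ∈ (Finset.Icc 1 (q + 1)).filter
        (fun j => r j - r (j - 1) ≤ r i₀ - r (i₀ - 1)), (r j - r (j - 1)) :=
      Finset.sum_le_sum_of_subset hsub
    have := hΔmin i₀ hi₀Ic (by omega)
    omega
  -- the "large" sum is at least (N+1)/2
  have hlarge : N + 1 ≤ 2 * ∑ i ∈ (Finset.Icc 1 (q + 1)).filter
      (fun i => Δ ≤ r i - r (i - 1)), (r i - r (i - 1)) := by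
    have hsplit := Finset.sum_filter_add_sum_filter_not (Finset.Icc 1 (q + 1))
      (fun i => Δ ≤ r i - r (i - 1)) (fun i => r i - r (i - 1))
    have heq : (Finset.Icc 1 (q + 1)).filter (fun i => ¬ Δ ≤ r i - r (i - 1))
        = (Finset.Icc 1 (q + 1)).filter (fun i => r i - r (i - 1) < Δ) := by
      apply Finset.filter_congr
      intro i _
      exact Nat.not_le
    rw [heq] at hsplit
    omega
  -- real arithmetic
  set L := Real.logb 2 ((N : ℝ) / (Δ : ℝ)) with hLdef
  have hΔR : (0 : ℝ) < (Δ : ℝ) := by exact_mod_cast hΔpos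
  have hL : 0 ≤ L := by
    apply Real.logb_nonneg one_lt_two
    rw [le_div_iff₀ hΔR]
    simpa using (by exact_mod_cast hΔN : (Δ : ℝ) ≤ (N : ℝ))
  have hS : (N : ℝ) / 2 ≤ ((∑ i ∈ (Finset.Icc 1 (q + 1)).filter
      (fun i => r i - r (i - 1) ≤ Δ), (r i - r (i - 1)) : ℕ) : ℝ) := by
    have : (N : ℝ) + 2 ≤ 2 * ((∑ i ∈ (Finset.Icc 1 (q + 1)).filter
        (fun i => r i - r (i - 1) ≤ Δ), (r i - r (i - 1)) : ℕ) : ℝ) := by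
      exact_mod_cast hΔge
    linarith
  have hB : (N : ℝ) / 2 ≤ ((∑ i ∈ (Finset.Icc 1 (q + 1)).filter
      (fun i => Δ ≤ r i - r (i - 1)), (r i - r (i - 1)) : ℕ) : ℝ) := by
    have : (N : ℝ) + 1 ≤ 2 * ((∑ i ∈ (Finset.Icc 1 (q + 1)).filter
        (fun i => Δ ≤ r i - r (i - 1)), (r i - r (i - 1)) : ℕ) : ℝ) := by
      exact_mod_cast hlarge
    linarith
  exact add_le_add (mul_le_mul_of_nonneg_right hS hL) hB
end

section
/- In the first sorting case, the released potential covers the sorting cost: for reals N ≥ 1, Δ ≥ 1 and d ≥ 1 with (2N)^d ≥ Δ^{d+1}, one has N/Δ ≥ (1/2)·N^{1/(d+1)} and consequently N + (N/2)·log₂(N/Δ) ≥ (1/(2(d+1)))·N·log₂ N. -/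
/-- In the first sorting case, the released potential covers the sorting
cost: for reals `N ≥ 1`, `Δ ≥ 1` and `d ≥ 1` with `(2N)^d ≥ Δ^(d+1)`, one has
`N/Δ ≥ (1/2)·N^(1/(d+1))` and consequently
`N + (N/2)·log₂(N/Δ) ≥ (1/(2(d+1)))·N·log₂ N`. -/
theorem statement8 (N Δ d : ℝ) (hN : 1 ≤ N) (hΔ : 1 ≤ Δ) (hd : 1 ≤ d)
    (hsort : Δ ^ (d + 1) ≤ (2 * N) ^ d) :
    (1 / 2) * N ^ (1 / (d + 1)) ≤ N / Δ ∧
    (1 / (2 * (d + 1))) * N * Real.logb 2 N ≤ N + (N / 2) * Real.logb 2 (N / Δ) := by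
  have hN0 : (0 : ℝ) < N := lt_of_lt_of_le one_pos hN
  have hΔ0 : (0 : ℝ) < Δ := lt_of_lt_of_le one_pos hΔ
  have hd1 : (0 : ℝ) < d + 1 := by linarith
  have h2N : (0 : ℝ) < 2 * N := by linarith
  -- Step 1: Δ ≤ (2N)^(d/(d+1))
  have hΔle : Δ ≤ (2 * N) ^ (d / (d + 1)) := by
    have h1 : (Δ ^ (d + 1)) ^ (1 / (d + 1)) ≤ ((2 * N) ^ d) ^ (1 / (d + 1)) :=
      Real.rpow_le_rpow (Real.rpow_nonneg hΔ0.le _) hsort (by positivity)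
    rwa [← Real.rpow_mul hΔ0.le, ← Real.rpow_mul h2N.le,
      mul_one_div, mul_one_div, div_self hd1.ne', Real.rpow_one] at h1
  have key : (1 / 2) * N ^ (1 / (d + 1)) ≤ N / Δ := by
    have h2 : N / Δ ≥ N / (2 * N) ^ (d / (d + 1)) :=
      div_le_div_of_nonneg_left hN0.le (by positivity) hΔle
    have hsplit : N ^ (1 / (d + 1)) * N ^ (d / (d + 1)) = N := by
      rw [← Real.rpow_add hN0]
      rw [show 1 / (d + 1) + d / (d + 1) = 1 by field_simp; ring, Real.rpow_one]
    have h2e : (2:ℝ) ^ (-(d / (d + 1))) * 2 ^ (d / (d + 1)) = 1 := by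
      rw [← Real.rpow_add (by norm_num)]; norm_num
    have h3 : N / (2 * N) ^ (d / (d + 1)) = 2 ^ (-(d / (d + 1))) * N ^ (1 / (d + 1)) := by
      rw [Real.mul_rpow (by norm_num) hN0.le, div_eq_iff (by positivity)]
      linear_combination (-1) * N ^ (1 / (d + 1)) * N ^ (d / (d + 1)) * h2e - hsplit
    have h4 : (1 / 2 : ℝ) ≤ 2 ^ (-(d / (d + 1))) := by
      have : (1 / 2 : ℝ) = 2 ^ (-1 : ℝ) := by
        rw [Real.rpow_neg_one]; norm_num
      rw [this]
      apply Real.rpow_le_rpow_left_iff (by norm_num : (1:ℝ) < 2) |>.mpr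
      rw [neg_le_neg_iff]
      rw [div_le_one hd1]; linarith
    calc (1 / 2) * N ^ (1 / (d + 1)) ≤ 2 ^ (-(d / (d + 1))) * N ^ (1 / (d + 1)) := by
          apply mul_le_mul_of_nonneg_right h4 (by positivity)
      _ = N / (2 * N) ^ (d / (d + 1)) := h3.symm
      _ ≤ N / Δ := h2
  refine ⟨key, ?_⟩
  -- Step 2
  have hpos : (0 : ℝ) < (1 / 2) * N ^ (1 / (d + 1)) := by positivity
  have hlog : Real.logb 2 ((1 / 2) * N ^ (1 / (d + 1))) ≤ Real.logb 2 (N / Δ) :=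
    Real.logb_le_logb_of_le (by norm_num) hpos key
  have hcalc : Real.logb 2 ((1 / 2) * N ^ (1 / (d + 1)))
      = -1 + (1 / (d + 1)) * Real.logb 2 N := by
    rw [Real.logb_mul (by norm_num) (by positivity),
      Real.logb_rpow_eq_mul_logb_of_pos hN0, one_div (2:ℝ), Real.logb_inv,
      Real.logb_self_eq_one (by norm_num)]
  rw [hcalc] at hlog
  have hlogN : 0 ≤ Real.logb 2 N := Real.logb_nonneg (by norm_num) hN
  have hmul : (N / 2) * (-1 + (1 / (d + 1)) * Real.logb 2 N)
      ≤ (N / 2) * Real.logb 2 (N / Δ) :=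
    mul_le_mul_of_nonneg_left hlog (by positivity)
  have heq : N + (N / 2) * (-1 + (1 / (d + 1)) * Real.logb 2 N)
      = N / 2 + (1 / (2 * (d + 1))) * N * Real.logb 2 N := by
    field_simp; ring
  nlinarith [hmul, heq]
end

section
/- In the second sorting case, the released potential covers the sorting cost: for reals N ≥ 1, Δ ≥ 1 and ε > 0 with N^{1 + 1/(1+ε)} ≥ Δ², one has N/Δ ≥ N^{ε/(2(1+ε))} and consequently N + (N/2)·log₂(N/Δ) ≥ N + (ε/(4(1+ε)))·N·log₂ N. -/
/-- In the second sorting case, the released potential covers the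
sorting cost: for reals `N ≥ 1`, `Δ ≥ 1` and `ε > 0` with `N^(1 + 1/(1+ε)) ≥ Δ²`,
one has `N/Δ ≥ N^(ε/(2(1+ε)))` and consequently
`N + (N/2)·log₂(N/Δ) ≥ N + (ε/(4(1+ε)))·N·log₂ N`. -/
theorem statement9 (N Δ ε : ℝ) (hN : 1 ≤ N) (hΔ : 1 ≤ Δ) (hε : 0 < ε)
    (hsort : Δ ^ (2 : ℝ) ≤ N ^ (1 + 1 / (1 + ε))) :
    N ^ (ε / (2 * (1 + ε))) ≤ N / Δ ∧
    N + (ε / (4 * (1 + ε))) * N * Real.logb 2 N ≤ N + (N / 2) * Real.logb 2 (N / Δ) := by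
  have hN0 : (0:ℝ) < N := lt_of_lt_of_le one_pos hN
  have hΔ0 : (0:ℝ) < Δ := lt_of_lt_of_le one_pos hΔ
  have hε1 : (0:ℝ) < 1 + ε := by linarith
  set c : ℝ := (1 + 1 / (1 + ε)) / 2 with hc
  have hΔle : Δ ≤ N ^ c := by
    have h := Real.rpow_le_rpow (by positivity) hsort (by norm_num : (0:ℝ) ≤ 1/2)
    rwa [← Real.rpow_mul hΔ0.le, ← Real.rpow_mul hN0.le, show (2:ℝ) * (1/2) = 1 by norm_num,
      Real.rpow_one, show (1 + 1 / (1 + ε)) * (1/2) = c by rw [hc]; ring] at h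
  have hexp : ε / (2 * (1 + ε)) = 1 - c := by
    rw [hc]; field_simp; ring
  have h1 : N ^ (ε / (2 * (1 + ε))) ≤ N / Δ := by
    rw [hexp, Real.rpow_sub hN0, Real.rpow_one]
    exact div_le_div_of_nonneg_left hN0.le hΔ0 hΔle
  refine ⟨h1, ?_⟩
  have hlogN : 0 ≤ Real.logb 2 N := Real.logb_nonneg one_lt_two hN
  have hlog : (ε / (2 * (1 + ε))) * Real.logb 2 N ≤ Real.logb 2 (N / Δ) := by
    have h2 : Real.logb 2 (N ^ (ε / (2 * (1 + ε)))) ≤ Real.logb 2 (N / Δ) := by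
      gcongr
      norm_num
    rwa [Real.logb, Real.log_rpow hN0, mul_div_assoc] at h2
  have : (ε / (4 * (1 + ε))) * N * Real.logb 2 N ≤ (N / 2) * Real.logb 2 (N / Δ) := by
    calc (ε / (4 * (1 + ε))) * N * Real.logb 2 N
        = (N / 2) * ((ε / (2 * (1 + ε))) * Real.logb 2 N) := by field_simp; ring
      _ ≤ (N / 2) * Real.logb 2 (N / Δ) := by
          apply mul_le_mul_of_nonneg_left hlog (by positivity)
  linarith
end

section
/- The query-rank entropy is bounded below via the weighted median: if Δ ≤ N then 𝓑 = ∑_{i=1}^{q+1} Δ_i·log₂(N/Δ_i) ≥ (N/2)·log₂(N/Δ). -/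
/-- The query-rank entropy is bounded below via the weighted median:
if `Δ ≤ N` then `𝓑 = ∑ Δ i · log₂(N / Δ i) ≥ (N/2)·log₂(N/Δ)`.  Here the gaps are
`Δ i = r i − r (i−1)` and `Δ` is the smallest element of `{Δ 1, …, Δ (q+1)}`
satisfying `2·∑_{j : Δ j ≤ Δ} Δ j ≥ N + 2`. -/
theorem statement12 (N q : ℕ) (hN : 1 ≤ N) (hq : 1 ≤ q)
    (r : ℕ → ℕ) (hr0 : r 0 = 0) (hrq : r (q + 1) = N + 1)
    (hmono : ∀ i, i ≤ q → r i < r (i + 1))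
    (Δ : ℕ)
    (hΔmem : ∃ i ∈ Finset.Icc 1 (q + 1), r i - r (i - 1) = Δ)
    (hΔge : N + 2 ≤ 2 * ∑ j ∈ (Finset.Icc 1 (q + 1)).filter
        (fun j => r j - r (j - 1) ≤ Δ), (r j - r (j - 1)))
    (hΔmin : ∀ i ∈ Finset.Icc 1 (q + 1),
        N + 2 ≤ 2 * ∑ j ∈ (Finset.Icc 1 (q + 1)).filter
            (fun j => r j - r (j - 1) ≤ r i - r (i - 1)), (r j - r (j - 1)) →
        Δ ≤ r i - r (i - 1))
    (hΔN : Δ ≤ N) :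
    (N : ℝ) / 2 * Real.logb 2 ((N : ℝ) / (Δ : ℝ)) ≤
      ∑ i ∈ Finset.Icc 1 (q + 1),
        ((r i - r (i - 1) : ℕ) : ℝ) *
          Real.logb 2 ((N : ℝ) / ((r i - r (i - 1) : ℕ) : ℝ)) := by
  -- monotonicity of r on [0, q+1]
  have hmono' : ∀ j, j ≤ q + 1 → ∀ i, i ≤ j → r i ≤ r j := by
    intro j
    induction j with
    | zero =>
      intro _ i hi
      have : i = 0 := Nat.le_zero.mp hi
      rw [this]
    | succ k ih =>
      intro hj i hi
      rcases Nat.lt_or_ge i (k + 1) with h | h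
      · have h1 : r i ≤ r k := ih (by omega) i (by omega)
        have h2 : r k < r (k + 1) := hmono k (by omega)
        omega
      · have : i = k + 1 := by omega
        rw [this]
  have hpos : ∀ i ∈ Finset.Icc 1 (q + 1), 1 ≤ r i - r (i - 1) := by
    intro i hi
    simp only [Finset.mem_Icc] at hi
    have h1 : r (i - 1) < r (i - 1 + 1) := hmono (i - 1) (by omega)
    have hiE : i - 1 + 1 = i := by omega
    rw [hiE] at h1
    omega
  have hub : ∀ i ∈ Finset.Icc 1 (q + 1), r i - r (i - 1) ≤ N := by
    intro i hi
    simp only [Finset.mem_Icc] at hi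
    rcases Nat.lt_or_ge i (q + 1) with h | h
    · have h1 : r i < r (i + 1) := hmono i (by omega)
      have h2 : r (i + 1) ≤ r (q + 1) := hmono' (q + 1) le_rfl (i + 1) (by omega)
      omega
    · have hi' : i = q + 1 := by omega
      subst hi'
      have h0 : r 0 < r 1 := hmono 0 (by omega)
      have h1 : r 1 ≤ r q := hmono' q (Nat.le_succ q) 1 hq
      have h2 : r (q + 1 - 1) = r q := by norm_num
      omega
  have hΔ1 : 1 ≤ Δ := by
    obtain ⟨i, hi, hΔ⟩ := hΔmem
    have := hpos i hi; omega
  have hNpos : (0 : ℝ) < N := by exact_mod_cast hN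
  have hΔpos : (0 : ℝ) < Δ := by exact_mod_cast hΔ1
  set L := Real.logb 2 ((N : ℝ) / (Δ : ℝ)) with hL
  have hLnn : 0 ≤ L :=
    Real.logb_nonneg (by norm_num) ((one_le_div hΔpos).mpr (by exact_mod_cast hΔN))
  set small := (Finset.Icc 1 (q + 1)).filter (fun j => r j - r (j - 1) ≤ Δ) with hsmall
  have hterm_nn : ∀ i ∈ Finset.Icc 1 (q + 1),
      0 ≤ ((r i - r (i - 1) : ℕ) : ℝ) *
        Real.logb 2 ((N : ℝ) / ((r i - r (i - 1) : ℕ) : ℝ)) := by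
    intro i hi
    apply mul_nonneg (Nat.cast_nonneg _)
    apply Real.logb_nonneg (by norm_num)
    have h1 : (1 : ℝ) ≤ ((r i - r (i - 1) : ℕ) : ℝ) := by exact_mod_cast hpos i hi
    exact (one_le_div (by linarith)).mpr (by exact_mod_cast hub i hi)
  have step1 : ∑ i ∈ small, ((r i - r (i - 1) : ℕ) : ℝ) *
        Real.logb 2 ((N : ℝ) / ((r i - r (i - 1) : ℕ) : ℝ)) ≤
      ∑ i ∈ Finset.Icc 1 (q + 1), ((r i - r (i - 1) : ℕ) : ℝ) *
        Real.logb 2 ((N : ℝ) / ((r i - r (i - 1) : ℕ) : ℝ)) :=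
    Finset.sum_le_sum_of_subset_of_nonneg (Finset.filter_subset _ _)
      (fun i hi _ => hterm_nn i hi)
  have step2 : ∀ i ∈ small, ((r i - r (i - 1) : ℕ) : ℝ) * L ≤
      ((r i - r (i - 1) : ℕ) : ℝ) *
        Real.logb 2 ((N : ℝ) / ((r i - r (i - 1) : ℕ) : ℝ)) := by
    intro i hi
    simp only [hsmall, Finset.mem_filter] at hi
    apply mul_le_mul_of_nonneg_left _ (Nat.cast_nonneg _)
    have hfi : (0 : ℝ) < ((r i - r (i - 1) : ℕ) : ℝ) := by
      exact_mod_cast hpos i hi.1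
    have hdiv : (N : ℝ) / (Δ : ℝ) ≤ (N : ℝ) / ((r i - r (i - 1) : ℕ) : ℝ) := by
      apply div_le_div_of_nonneg_left hNpos.le hfi
      exact_mod_cast hi.2
    exact Real.logb_le_logb_of_le (by norm_num)
      (div_pos hNpos hΔpos) hdiv
  have hsum : (N : ℝ) / 2 ≤ ∑ j ∈ small, ((r j - r (j - 1) : ℕ) : ℝ) := by
    have h : ((N : ℝ) + 2) ≤ 2 * ∑ j ∈ small, ((r j - r (j - 1) : ℕ) : ℝ) := by
      exact_mod_cast hΔge
    linarith
  calc (N : ℝ) / 2 * L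
      ≤ (∑ j ∈ small, ((r j - r (j - 1) : ℕ) : ℝ)) * L :=
        mul_le_mul_of_nonneg_right hsum hLnn
    _ = ∑ j ∈ small, ((r j - r (j - 1) : ℕ) : ℝ) * L := Finset.sum_mul _ _ _
    _ ≤ ∑ j ∈ small, ((r j - r (j - 1) : ℕ) : ℝ) *
          Real.logb 2 ((N : ℝ) / ((r j - r (j - 1) : ℕ) : ℝ)) :=
        Finset.sum_le_sum step2
    _ ≤ _ := step1
end

section
/- In the first sorting case the entropy lower bound is of sorting order: if Δ ≤ N, d ≥ 1 is real and (2N)^d ≥ Δ^{d+1}, then 𝓑 = ∑_{i=1}^{q+1} Δ_i·log₂(N/Δ_i) ≥ (N/(2(d+1)))·log₂ N − N/2. (This justifies that 𝓑_{I/O} = Ω(Sort(N)) when the algorithm resorts to sorting.) -/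
/-- In the first sorting case the entropy lower bound is of sorting
order: if `Δ ≤ N`, `d ≥ 1` is real and `(2N)^d ≥ Δ^(d+1)`, then
`𝓑 = ∑ Δ i · log₂(N / Δ i) ≥ (N/(2(d+1)))·log₂ N − N/2`.  Here the gaps are
`Δ i = r i − r (i−1)` and `Δ` is the smallest element of `{Δ 1, …, Δ (q+1)}`
satisfying `2·∑_{j : Δ j ≤ Δ} Δ j ≥ N + 2`. -/
theorem statement13 (N q : ℕ) (hN : 1 ≤ N) (hq : 1 ≤ q)
    (r : ℕ → ℕ) (hr0 : r 0 = 0) (hrq : r (q + 1) = N + 1)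
    (hmono : ∀ i, i ≤ q → r i < r (i + 1))
    (Δ : ℕ)
    (hΔmem : ∃ i ∈ Finset.Icc 1 (q + 1), r i - r (i - 1) = Δ)
    (hΔge : N + 2 ≤ 2 * ∑ j ∈ (Finset.Icc 1 (q + 1)).filter
        (fun j => r j - r (j - 1) ≤ Δ), (r j - r (j - 1)))
    (hΔmin : ∀ i ∈ Finset.Icc 1 (q + 1),
        N + 2 ≤ 2 * ∑ j ∈ (Finset.Icc 1 (q + 1)).filter
            (fun j => r j - r (j - 1) ≤ r i - r (i - 1)), (r j - r (j - 1)) →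
        Δ ≤ r i - r (i - 1))
    (hΔN : Δ ≤ N)
    (d : ℝ) (hd : 1 ≤ d)
    (hsort : ((Δ : ℝ)) ^ (d + 1) ≤ (2 * (N : ℝ)) ^ d) :
    (N : ℝ) / (2 * (d + 1)) * Real.logb 2 (N : ℝ) - (N : ℝ) / 2 ≤
      ∑ i ∈ Finset.Icc 1 (q + 1),
        ((r i - r (i - 1) : ℕ) : ℝ) *
          Real.logb 2 ((N : ℝ) / ((r i - r (i - 1) : ℕ) : ℝ)) := by
  -- monotonicity with gaps
  have hmono' : ∀ i j, i ≤ j → j ≤ q + 1 → r i + (j - i) ≤ r j := by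
    intro i j hij hj
    induction j with
    | zero =>
      have : i = 0 := by omega
      subst this; omega
    | succ n ih =>
      rcases Nat.lt_or_ge i (n+1) with h | h
      · have h1 : r i + (n - i) ≤ r n := ih (by omega) (by omega)
        have h2 : r n < r (n+1) := hmono n (by omega)
        omega
      · have : i = n + 1 := by omega
        subst this; omega
  have hgap1 : ∀ i ∈ Finset.Icc 1 (q+1), 1 ≤ r i - r (i-1) := by
    intro i hi
    simp only [Finset.mem_Icc] at hi
    have h := hmono (i-1) (by omega)
    have he : i - 1 + 1 = i := by omega
    rw [he] at h
    omega
  have hgapN : ∀ i ∈ Finset.Icc 1 (q+1), r i - r (i-1) ≤ N := by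
    intro i hi
    simp only [Finset.mem_Icc] at hi
    have h1 : r 0 + (i - 1 - 0) ≤ r (i-1) := hmono' 0 (i-1) (by omega) (by omega)
    have h2 : r i + (q + 1 - i) ≤ r (q+1) := hmono' i (q+1) hi.2 le_rfl
    omega
  -- Δ bounds
  obtain ⟨i₀, hi₀, hΔeq⟩ := hΔmem
  have hΔ1 : 1 ≤ Δ := hΔeq ▸ hgap1 i₀ hi₀
  have hΔR : (1:ℝ) ≤ (Δ:ℝ) := by exact_mod_cast hΔ1
  have hNR : (1:ℝ) ≤ (N:ℝ) := by exact_mod_cast hN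
  have hl2 : (0:ℝ) < Real.log 2 := Real.log_pos (by norm_num)
  -- key: logb 2 (N/Δ) ≥ logb 2 N / (d+1) - 1
  have hlog : Real.logb 2 ((N:ℝ)) / (d+1) - 1 ≤ Real.logb 2 ((N:ℝ) / (Δ:ℝ)) := by
    have hΔpos : (0:ℝ) < (Δ:ℝ) := by linarith
    have hNpos : (0:ℝ) < (N:ℝ) := by linarith
    have hlsort : (d+1) * Real.log (Δ:ℝ) ≤ d * (Real.log 2 + Real.log (N:ℝ)) := by
      have h := Real.log_le_log (by positivity) hsort
      rw [Real.log_rpow hΔpos, Real.log_rpow (by positivity),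
        Real.log_mul (by norm_num) (by positivity)] at h
      linarith
    have hlN : 0 ≤ Real.log (N:ℝ) := Real.log_nonneg hNR
    rw [Real.logb, Real.logb, Real.log_div (by positivity) (by positivity)]
    have hdpos : (0:ℝ) < d + 1 := by linarith
    have heq : Real.log (N:ℝ) / Real.log 2 / (d+1) - 1 =
        (Real.log (N:ℝ) - (d+1) * Real.log 2) / ((d+1) * Real.log 2) := by
      field_simp
    rw [heq, div_le_div_iff₀ (by positivity) hl2]
    nlinarith [mul_pos hl2 hdpos]
  have hcnn : 0 ≤ Real.logb 2 ((N:ℝ) / (Δ:ℝ)) := by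
    apply Real.logb_nonneg (by norm_num)
    rw [le_div_iff₀ (by linarith)]
    have : (Δ:ℝ) ≤ (N:ℝ) := by exact_mod_cast hΔN
    linarith
  set c := Real.logb 2 ((N:ℝ) / (Δ:ℝ)) with hc
  set S := (Finset.Icc 1 (q + 1)).filter (fun j => r j - r (j - 1) ≤ Δ) with hS
  -- step 1: drop terms outside S
  have step1 : ∑ i ∈ S, ((r i - r (i - 1) : ℕ) : ℝ) *
      Real.logb 2 ((N : ℝ) / ((r i - r (i - 1) : ℕ) : ℝ)) ≤
      ∑ i ∈ Finset.Icc 1 (q + 1), ((r i - r (i - 1) : ℕ) : ℝ) *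
      Real.logb 2 ((N : ℝ) / ((r i - r (i - 1) : ℕ) : ℝ)) := by
    apply Finset.sum_le_sum_of_subset_of_nonneg (Finset.filter_subset _ _)
    intro i hi _
    have h1 := hgap1 i hi
    have h2 := hgapN i hi
    have h1R : (1:ℝ) ≤ ((r i - r (i-1) : ℕ) : ℝ) := by exact_mod_cast h1
    have h2R : ((r i - r (i-1) : ℕ) : ℝ) ≤ (N:ℝ) := by exact_mod_cast h2
    apply mul_nonneg (by linarith)
    apply Real.logb_nonneg (by norm_num)
    rw [le_div_iff₀ (by linarith)]
    linarith
  -- step 2: on S, each term ≥ gap * c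
  have step2 : ∑ i ∈ S, ((r i - r (i - 1) : ℕ) : ℝ) * c ≤
      ∑ i ∈ S, ((r i - r (i - 1) : ℕ) : ℝ) *
      Real.logb 2 ((N : ℝ) / ((r i - r (i - 1) : ℕ) : ℝ)) := by
    apply Finset.sum_le_sum
    intro i hi
    simp only [hS, Finset.mem_filter] at hi
    have h1 := hgap1 i hi.1
    have h1R : (1:ℝ) ≤ ((r i - r (i-1) : ℕ) : ℝ) := by exact_mod_cast h1
    have hle : ((r i - r (i-1) : ℕ) : ℝ) ≤ (Δ:ℝ) := by exact_mod_cast hi.2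
    apply mul_le_mul_of_nonneg_left _ (by linarith)
    rw [hc]
    apply Real.logb_le_logb_of_le (by norm_num : (1:ℝ) < 2) (by positivity)
    apply div_le_div_of_nonneg_left (by linarith) (by linarith) hle
  -- step 3
  have hsum : ((N:ℝ) + 2) / 2 ≤ ∑ i ∈ S, ((r i - r (i - 1) : ℕ) : ℝ) := by
    rw [div_le_iff₀ (by norm_num)]
    have : ((N + 2 : ℕ) : ℝ) ≤ ((2 * ∑ j ∈ S, (r j - r (j - 1)) : ℕ) : ℝ) := by
      exact_mod_cast hΔge
    push_cast at this
    linarith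
  have step3 : (N:ℝ) / 2 * c ≤ ∑ i ∈ S, ((r i - r (i - 1) : ℕ) : ℝ) * c := by
    rw [← Finset.sum_mul]
    apply mul_le_mul_of_nonneg_right _ hcnn
    linarith
  have final : (N : ℝ) / (2 * (d + 1)) * Real.logb 2 (N : ℝ) - (N : ℝ) / 2 ≤
      (N:ℝ) / 2 * c := by
    have hNnn : (0:ℝ) ≤ (N:ℝ)/2 := by linarith
    have h := mul_le_mul_of_nonneg_left hlog hNnn
    have : (N:ℝ)/2 * (Real.logb 2 ((N:ℝ)) / (d+1) - 1) =
        (N : ℝ) / (2 * (d + 1)) * Real.logb 2 (N : ℝ) - (N : ℝ) / 2 := by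
      field_simp
    linarith [this ▸ h]
  linarith
end

section
/- In the second sorting case the entropy lower bound is of sorting order: if Δ ≤ N, ε > 0 is real and N^{1 + 1/(1+ε)} ≥ Δ², then 𝓑 = ∑_{i=1}^{q+1} Δ_i·log₂(N/Δ_i) ≥ (ε/(4(1+ε)))·N·log₂ N. -/
/-- In the second sorting case the entropy lower bound is of sorting
order: if `Δ ≤ N`, `ε > 0` is real and `N^(1 + 1/(1+ε)) ≥ Δ²`, then
`𝓑 = ∑ Δ i · log₂(N / Δ i) ≥ (ε/(4(1+ε)))·N·log₂ N`.  Here the gaps are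
`Δ i = r i − r (i−1)` and `Δ` is the smallest element of `{Δ 1, …, Δ (q+1)}`
satisfying `2·∑_{j : Δ j ≤ Δ} Δ j ≥ N + 2`. -/
theorem statement14 (N q : ℕ) (hN : 1 ≤ N) (hq : 1 ≤ q)
    (r : ℕ → ℕ) (hr0 : r 0 = 0) (hrq : r (q + 1) = N + 1)
    (hmono : ∀ i, i ≤ q → r i < r (i + 1))
    (Δ : ℕ)
    (hΔmem : ∃ i ∈ Finset.Icc 1 (q + 1), r i - r (i - 1) = Δ)
    (hΔge : N + 2 ≤ 2 * ∑ j ∈ (Finset.Icc 1 (q + 1)).filter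
        (fun j => r j - r (j - 1) ≤ Δ), (r j - r (j - 1)))
    (hΔmin : ∀ i ∈ Finset.Icc 1 (q + 1),
        N + 2 ≤ 2 * ∑ j ∈ (Finset.Icc 1 (q + 1)).filter
            (fun j => r j - r (j - 1) ≤ r i - r (i - 1)), (r j - r (j - 1)) →
        Δ ≤ r i - r (i - 1))
    (hΔN : Δ ≤ N)
    (ε : ℝ) (hε : 0 < ε)
    (hsort : ((Δ : ℝ)) ^ (2 : ℝ) ≤ ((N : ℝ)) ^ (1 + 1 / (1 + ε))) :
    ε / (4 * (1 + ε)) * (N : ℝ) * Real.logb 2 (N : ℝ) ≤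
      ∑ i ∈ Finset.Icc 1 (q + 1),
        ((r i - r (i - 1) : ℕ) : ℝ) *
          Real.logb 2 ((N : ℝ) / ((r i - r (i - 1) : ℕ) : ℝ)) := by
  -- gap positivity
  have hgap : ∀ i ∈ Finset.Icc 1 (q + 1), 1 ≤ r i - r (i - 1) := by
    intro i hi
    simp only [Finset.mem_Icc] at hi
    have := hmono (i - 1) (by omega)
    have h1 : i - 1 + 1 = i := by omega
    rw [h1] at this
    omega
  -- telescoping sum
  have key : ∀ n, n ≤ q + 1 → ∑ i ∈ Finset.Icc 1 n, (r i - r (i - 1)) = r n := by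
    intro n
    induction n with
    | zero => simp [hr0]
    | succ m ih =>
      intro h
      rw [Finset.sum_Icc_succ_top (by omega : 1 ≤ m + 1), ih (by omega)]
      have := hmono m (by omega)
      have h1 : m + 1 - 1 = m := by omega
      rw [h1]
      omega
  have hsum : ∑ i ∈ Finset.Icc 1 (q + 1), (r i - r (i - 1)) = N + 1 := by
    rw [key (q + 1) le_rfl, hrq]
  -- each gap is at most N
  have hdN : ∀ i ∈ Finset.Icc 1 (q + 1), r i - r (i - 1) ≤ N := by
    intro i hi
    have herase : (r i - r (i - 1)) + ∑ j ∈ (Finset.Icc 1 (q + 1)).erase i,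
        (r j - r (j - 1)) = ∑ j ∈ Finset.Icc 1 (q + 1), (r j - r (j - 1)) :=
      Finset.add_sum_erase _ (fun j => r j - r (j - 1)) hi
    have hcard : ((Finset.Icc 1 (q + 1)).erase i).card = q := by
      rw [Finset.card_erase_of_mem hi, Nat.card_Icc]
      omega
    have hge : q ≤ ∑ j ∈ (Finset.Icc 1 (q + 1)).erase i, (r j - r (j - 1)) := by
      calc q = ∑ _j ∈ (Finset.Icc 1 (q + 1)).erase i, 1 := by
              rw [Finset.sum_const, hcard, smul_eq_mul, mul_one]
        _ ≤ _ := Finset.sum_le_sum (fun j hj => hgap j (Finset.mem_of_mem_erase hj))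
    omega
  have hΔ1 : 1 ≤ Δ := by
    obtain ⟨i, hi, hie⟩ := hΔmem
    have := hgap i hi
    omega
  -- real facts
  have hN0 : (0 : ℝ) < (N : ℝ) := by exact_mod_cast hN
  have hΔ0 : (0 : ℝ) < (Δ : ℝ) := by exact_mod_cast hΔ1
  have hΔNr : (Δ : ℝ) ≤ (N : ℝ) := by exact_mod_cast hΔN
  have hb : (1 : ℝ) < 2 := one_lt_two
  set L : ℝ := Real.logb 2 ((N : ℝ) / (Δ : ℝ)) with hL
  have hL0 : 0 ≤ L := Real.logb_nonneg hb (by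
    rw [le_div_iff₀ hΔ0]; linarith)
  have hε1 : (0 : ℝ) < 1 + ε := by linarith
  -- main log inequality
  have hlogD : 2 * Real.logb 2 (Δ : ℝ) ≤ (1 + 1 / (1 + ε)) * Real.logb 2 (N : ℝ) := by
    have h1 : Real.logb 2 ((Δ : ℝ) ^ (2 : ℝ)) ≤
        Real.logb 2 ((N : ℝ) ^ (1 + 1 / (1 + ε))) :=
      Real.logb_le_logb_of_le hb (by positivity) hsort
    rwa [Real.logb_rpow_eq_mul_logb_of_pos hΔ0, Real.logb_rpow_eq_mul_logb_of_pos hN0] at h1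
  have hLge : ε / (2 * (1 + ε)) * Real.logb 2 (N : ℝ) ≤ L := by
    rw [hL, Real.logb_div (ne_of_gt hN0) (ne_of_gt hΔ0)]
    have heq : (1 : ℝ) - (1 + 1 / (1 + ε)) / 2 = ε / (2 * (1 + ε)) := by
      field_simp; ring
    have h3 : ε / (2 * (1 + ε)) * Real.logb 2 (N : ℝ) =
        Real.logb 2 (N : ℝ) - (1 + 1 / (1 + ε)) / 2 * Real.logb 2 (N : ℝ) := by
      rw [← heq]; ring
    linarith [hlogD]
  -- filtered sum in ℝ
  set S := (Finset.Icc 1 (q + 1)).filter (fun j => r j - r (j - 1) ≤ Δ) with hS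
  have hSsum : ((N : ℝ) + 2) / 2 ≤ ∑ j ∈ S, ((r j - r (j - 1) : ℕ) : ℝ) := by
    have : (N + 2 : ℕ) ≤ 2 * ∑ j ∈ S, (r j - r (j - 1)) := hΔge
    have h2 : ((N : ℝ) + 2) ≤ 2 * ∑ j ∈ S, ((r j - r (j - 1) : ℕ) : ℝ) := by
      push_cast
      exact_mod_cast this
    linarith
  calc ε / (4 * (1 + ε)) * (N : ℝ) * Real.logb 2 (N : ℝ)
      = (N : ℝ) / 2 * (ε / (2 * (1 + ε)) * Real.logb 2 (N : ℝ)) := by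
        field_simp
        ring
    _ ≤ (N : ℝ) / 2 * L := by
        apply mul_le_mul_of_nonneg_left hLge (by positivity)
    _ ≤ ((N : ℝ) + 2) / 2 * L := by
        apply mul_le_mul_of_nonneg_right _ hL0
        linarith
    _ ≤ (∑ j ∈ S, ((r j - r (j - 1) : ℕ) : ℝ)) * L := by
        apply mul_le_mul_of_nonneg_right hSsum hL0
    _ = ∑ j ∈ S, ((r j - r (j - 1) : ℕ) : ℝ) * L := by
        rw [Finset.sum_mul]
    _ ≤ ∑ j ∈ S, ((r j - r (j - 1) : ℕ) : ℝ) *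
          Real.logb 2 ((N : ℝ) / ((r j - r (j - 1) : ℕ) : ℝ)) := by
        apply Finset.sum_le_sum
        intro j hj
        rw [hS, Finset.mem_filter] at hj
        obtain ⟨hj1, hj2⟩ := hj
        have hd1 : (1 : ℝ) ≤ ((r j - r (j - 1) : ℕ) : ℝ) := by
          exact_mod_cast hgap j hj1
        have hdΔ : ((r j - r (j - 1) : ℕ) : ℝ) ≤ (Δ : ℝ) := by exact_mod_cast hj2
        apply mul_le_mul_of_nonneg_left _ (by linarith)
        apply Real.logb_le_logb_of_le hb (by positivity)
        exact div_le_div_of_nonneg_left (le_of_lt hN0) (by linarith) hdΔ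
    _ ≤ ∑ i ∈ Finset.Icc 1 (q + 1),
          ((r i - r (i - 1) : ℕ) : ℝ) *
            Real.logb 2 ((N : ℝ) / ((r i - r (i - 1) : ℕ) : ℝ)) := by
        apply Finset.sum_le_sum_of_subset_of_nonneg (Finset.filter_subset _ _)
        intro i hi _
        have hd1 : (1 : ℝ) ≤ ((r i - r (i - 1) : ℕ) : ℝ) := by
          exact_mod_cast hgap i hi
        have hdN' : ((r i - r (i - 1) : ℕ) : ℝ) ≤ (N : ℝ) := by
          exact_mod_cast hdN i hi
        apply mul_nonneg (by linarith)
        apply Real.logb_nonneg hb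
        rw [le_div_iff₀ (by linarith)]
        linarith
end

section
/- In the non-sorting case, the I/O potential released by one partitioning round is at least (1/2)·(N/B + (N/B)·log_M(N/Δ)); precisely, if Δ ≤ N, M > 1 and B > 0, then (1/B)·[(∑_{i : Δ_i ≤ Δ} Δ_i)·log_M(N/Δ) + ∑_{i : Δ_i ≥ Δ} Δ_i] ≥ (1/2)·(N/B + (N/B)·log_M(N/Δ)). -/
/-- In the non-sorting case, the I/O potential released by one
partitioning round is at least `(1/2)·(N/B + (N/B)·log_M(N/Δ))`; precisely, if
`Δ ≤ N`, `M > 1` and `B > 0`, then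
`(1/B)·[(∑_{i : Δ i ≤ Δ} Δ i)·log_M(N/Δ) + ∑_{i : Δ i ≥ Δ} Δ i]
  ≥ (1/2)·(N/B + (N/B)·log_M(N/Δ))`.  Here the gaps are `Δ i = r i − r (i−1)` and
`Δ` is the smallest element of `{Δ 1, …, Δ (q+1)}` satisfying
`2·∑_{j : Δ j ≤ Δ} Δ j ≥ N + 2`. -/
theorem statement15 (N q : ℕ) (hN : 1 ≤ N) (hq : 1 ≤ q)
    (r : ℕ → ℕ) (hr0 : r 0 = 0) (hrq : r (q + 1) = N + 1)
    (hmono : ∀ i, i ≤ q → r i < r (i + 1))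
    (Δ : ℕ)
    (hΔmem : ∃ i ∈ Finset.Icc 1 (q + 1), r i - r (i - 1) = Δ)
    (hΔge : N + 2 ≤ 2 * ∑ j ∈ (Finset.Icc 1 (q + 1)).filter
        (fun j => r j - r (j - 1) ≤ Δ), (r j - r (j - 1)))
    (hΔmin : ∀ i ∈ Finset.Icc 1 (q + 1),
        N + 2 ≤ 2 * ∑ j ∈ (Finset.Icc 1 (q + 1)).filter
            (fun j => r j - r (j - 1) ≤ r i - r (i - 1)), (r j - r (j - 1)) →
        Δ ≤ r i - r (i - 1))
    (hΔN : Δ ≤ N)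
    (M B : ℝ) (hM : 1 < M) (hB : 0 < B) :
    (1 / 2) * ((N : ℝ) / B + (N : ℝ) / B * Real.logb M ((N : ℝ) / (Δ : ℝ))) ≤
      (1 / B) *
        (((∑ i ∈ (Finset.Icc 1 (q + 1)).filter
              (fun i => r i - r (i - 1) ≤ Δ), (r i - r (i - 1)) : ℕ) : ℝ)
            * Real.logb M ((N : ℝ) / (Δ : ℝ))
          + ((∑ i ∈ (Finset.Icc 1 (q + 1)).filter
              (fun i => Δ ≤ r i - r (i - 1)), (r i - r (i - 1)) : ℕ) : ℝ)) := by
  -- telescoping: total of all gaps is N + 1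
  have key : ∀ n, n ≤ q + 1 →
      (∑ i ∈ Finset.Icc 1 n, (r i - r (i - 1)) = r n - r 0 ∧ r 0 ≤ r n) := by
    intro n
    induction n with
    | zero => intro _; simp
    | succ m ih =>
      intro hm
      obtain ⟨hsum, hle⟩ := ih (by omega)
      have hstep : r m < r (m + 1) := hmono m (by omega)
      rw [Finset.sum_Icc_succ_top (by omega : 1 ≤ m + 1)]
      constructor
      · simp only [Nat.add_sub_cancel]
        omega
      · omega
  have htotal : ∑ i ∈ Finset.Icc 1 (q + 1), (r i - r (i - 1)) = N + 1 := by
    obtain ⟨hsum, _⟩ := key (q + 1) le_rfl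
    rw [hsum, hr0, hrq]
    omega

  -- split total into large gaps and strictly-small gaps
  have hsplit : (∑ i ∈ (Finset.Icc 1 (q + 1)).filter
        (fun i => Δ ≤ r i - r (i - 1)), (r i - r (i - 1)))
      + (∑ i ∈ (Finset.Icc 1 (q + 1)).filter
        (fun i => ¬ Δ ≤ r i - r (i - 1)), (r i - r (i - 1))) = N + 1 := by
    rw [Finset.sum_filter_add_sum_filter_not, htotal]
  set T := ∑ i ∈ (Finset.Icc 1 (q + 1)).filter
      (fun i => Δ ≤ r i - r (i - 1)), (r i - r (i - 1)) with hT
  set U := ∑ i ∈ (Finset.Icc 1 (q + 1)).filter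
      (fun i => ¬ Δ ≤ r i - r (i - 1)), (r i - r (i - 1)) with hU
  set S := ∑ i ∈ (Finset.Icc 1 (q + 1)).filter
      (fun i => r i - r (i - 1) ≤ Δ), (r i - r (i - 1)) with hS
  -- strictly-small gaps sum to at most (N+1)/2
  have hUbound : 2 * U ≤ N + 1 := by
    by_cases hne : ((Finset.Icc 1 (q + 1)).filter
        (fun i => ¬ Δ ≤ r i - r (i - 1))).Nonempty
    · obtain ⟨i₀, hi₀, hmax⟩ := Finset.exists_max_image _
        (fun j => r j - r (j - 1)) hne
      have hi₀I : i₀ ∈ Finset.Icc 1 (q + 1) := (Finset.mem_filter.mp hi₀).1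
      have hi₀lt : r i₀ - r (i₀ - 1) < Δ := by
        have := (Finset.mem_filter.mp hi₀).2
        omega
      have hsubset : (Finset.Icc 1 (q + 1)).filter
          (fun i => ¬ Δ ≤ r i - r (i - 1)) ⊆ (Finset.Icc 1 (q + 1)).filter
          (fun j => r j - r (j - 1) ≤ r i₀ - r (i₀ - 1)) := by
        intro j hj
        rw [Finset.mem_filter]
        exact ⟨(Finset.mem_filter.mp hj).1, hmax j hj⟩
      have hle : U ≤ ∑ j ∈ (Finset.Icc 1 (q + 1)).filter
          (fun j => r j - r (j - 1) ≤ r i₀ - r (i₀ - 1)), (r j - r (j - 1)) :=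
        Finset.sum_le_sum_of_subset hsubset
      have hnot : ¬ (N + 2 ≤ 2 * ∑ j ∈ (Finset.Icc 1 (q + 1)).filter
          (fun j => r j - r (j - 1) ≤ r i₀ - r (i₀ - 1)), (r j - r (j - 1))) := by
        intro hcontra
        exact absurd (hΔmin i₀ hi₀I hcontra) (by omega)
      omega
    · rw [Finset.not_nonempty_iff_eq_empty] at hne
      have hU0 : U = 0 := by rw [hU, hne, Finset.sum_empty]
      omega
  have hTbound : N + 1 ≤ 2 * T := by omega
  -- Δ ≥ 1
  have hΔpos : 1 ≤ Δ := by
    obtain ⟨i, hi, hieq⟩ := hΔmem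
    rw [Finset.mem_Icc] at hi
    have := hmono (i - 1) (by omega)
    have h1 : i - 1 + 1 = i := by omega
    rw [h1] at this
    omega
  -- real part
  have hΔR : (0 : ℝ) < (Δ : ℝ) := by exact_mod_cast hΔpos
  have hL : 0 ≤ Real.logb M ((N : ℝ) / (Δ : ℝ)) := by
    apply Real.logb_nonneg hM
    rw [one_le_div hΔR]
    exact_mod_cast hΔN
  have hSR : (N : ℝ) + 2 ≤ 2 * (S : ℝ) := by exact_mod_cast hΔge
  have hTR : (N : ℝ) + 1 ≤ 2 * (T : ℝ) := by exact_mod_cast hTbound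
  set L := Real.logb M ((N : ℝ) / (Δ : ℝ)) with hLdef
  have hBinv : (0 : ℝ) < B⁻¹ := by positivity
  have main : (N : ℝ) + (N : ℝ) * L ≤ 2 * ((S : ℝ) * L + (T : ℝ)) := by
    nlinarith [mul_le_mul_of_nonneg_right
      (show (N : ℝ) ≤ 2 * (S : ℝ) by linarith) hL]
  have hmul := mul_le_mul_of_nonneg_right main hBinv.le
  simp only [one_div, div_eq_mul_inv]
  nlinarith [hmul]
end

section
/- In the first sorting case, the released I/O potential covers the funnelsort cost: for reals N ≥ 1, Δ ≥ 1, d ≥ 1, M ≥ 2 and B > 0 with (2N)^d ≥ Δ^{d+1}, one has N/B + (N/(2B))·log_M(N/Δ) ≥ (1/(2(d+1)))·(N/B)·log_M N; i.e., the released I/O potential is Ω((N/B)·log_M N). -/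
/-- In the first sorting case, the released I/O potential covers the
funnelsort cost: for reals `N ≥ 1`, `Δ ≥ 1`, `d ≥ 1`, `M ≥ 2` and `B > 0` with
`(2N)^d ≥ Δ^(d+1)`, one has
`N/B + (N/(2B))·log_M(N/Δ) ≥ (1/(2(d+1)))·(N/B)·log_M N`;
i.e. the released I/O potential is `Ω((N/B)·log_M N)`. -/
theorem statement16 (N Δ d M B : ℝ) (hN : 1 ≤ N) (hΔ : 1 ≤ Δ) (hd : 1 ≤ d)
    (hM : 2 ≤ M) (hB : 0 < B)
    (hsort : Δ ^ (d + 1) ≤ (2 * N) ^ d) :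
    (1 / (2 * (d + 1))) * (N / B) * Real.logb M N ≤
      N / B + (N / (2 * B)) * Real.logb M (N / Δ) := by
  have hN0 : (0:ℝ) < N := lt_of_lt_of_le one_pos hN
  have hΔ0 : (0:ℝ) < Δ := lt_of_lt_of_le one_pos hΔ
  have ht : 0 < Real.log M := Real.log_pos (lt_of_lt_of_le one_lt_two hM)
  have h2 : Real.log 2 ≤ Real.log M := Real.log_le_log two_pos hM
  have ha : 0 ≤ Real.log N := Real.log_nonneg hN
  have hlΔ : 0 ≤ Real.log Δ := Real.log_nonneg hΔ
  have h1 : (d + 1) * Real.log Δ ≤ d * Real.log (2 * N) := by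
    rw [← Real.log_rpow hΔ0, ← Real.log_rpow (by positivity)]
    exact Real.log_le_log (by positivity) hsort
  rw [Real.log_mul two_ne_zero hN0.ne'] at h1
  have key : Real.log N ≤ 2 * (d + 1) * Real.log M
      + (d + 1) * (Real.log N - Real.log Δ) := by
    nlinarith [mul_nonneg (le_of_lt (lt_of_lt_of_le one_pos hd)) ha,
      mul_le_mul_of_nonneg_left h2 (le_trans zero_le_one hd)]
  rw [Real.logb, Real.logb, Real.log_div hN0.ne' hΔ0.ne']
  rw [← sub_nonneg]
  have heq : N / B + N / (2 * B) * ((Real.log N - Real.log Δ) / Real.log M)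
      - 1 / (2 * (d + 1)) * (N / B) * (Real.log N / Real.log M)
      = (N / (2 * B * (d + 1) * Real.log M)) *
        (2 * (d + 1) * Real.log M + (d + 1) * (Real.log N - Real.log Δ) - Real.log N) := by
    have hd1 : d + 1 ≠ 0 := by positivity
    field_simp
  rw [heq]
  exact mul_nonneg (by positivity) (by linarith)
end

section
/- If all q interior query ranks are clustered in a narrow range, the query-rank entropy is linear: if q ≥ 1, N ≥ 2 and r_q − r_1 ≤ N/log₂ N, then 𝓑 = ∑_{i=1}^{q+1} Δ_i·log₂(N/Δ_i) ≤ 3N. (This makes precise the paper's example that queries confined to a range of size O(N/log N) have entropy bound O(N), in contrast to the bound N(1 + log q).) -/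
/-- Key pointwise bound: `x * log₂(N/x) ≤ N` for positive `x`, `N`. -/
lemma keybound17 (N x : ℝ) (hN : 0 < N) (hx : 0 < x) :
    x * Real.logb 2 (N / x) ≤ N := by
  have hlog2 : 0 < Real.log 2 := Real.log_pos one_lt_two
  have he : (0:ℝ) < Real.exp 1 := Real.exp_pos 1
  have h1 : Real.log (N / x) ≤ N / (x * Real.exp 1) := by
    have h2 : Real.log (N / (x * Real.exp 1)) ≤ N / (x * Real.exp 1) - 1 :=
      Real.log_le_sub_one_of_pos (by positivity)
    have h3 : Real.log (N / x) = Real.log (N / (x * Real.exp 1)) + 1 := by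
      rw [Real.log_div hN.ne' hx.ne', Real.log_div hN.ne' (by positivity),
        Real.log_mul hx.ne' he.ne', Real.log_exp]
      ring
    linarith
  have h4 : x * Real.log (N / x) ≤ N / Real.exp 1 := by
    calc x * Real.log (N / x) ≤ x * (N / (x * Real.exp 1)) :=
          mul_le_mul_of_nonneg_left h1 hx.le
      _ = N / Real.exp 1 := by field_simp
  have hel : 1 ≤ Real.exp 1 * Real.log 2 := by
    nlinarith [Real.exp_one_gt_d9, Real.log_two_gt_d9]
  have h5 : (N / Real.exp 1) / Real.log 2 ≤ N := by
    rw [div_div, div_le_iff₀ (by positivity)]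
    nlinarith
  calc x * Real.logb 2 (N / x) = (x * Real.log (N / x)) / Real.log 2 := by
        rw [Real.logb]; ring
    _ ≤ (N / Real.exp 1) / Real.log 2 := by gcongr
    _ ≤ N := h5

/-- If all `q` interior query ranks are clustered in a narrow range,
the query-rank entropy is linear: if `q ≥ 1`, `N ≥ 2` and `r q − r 1 ≤ N / log₂ N`,
then `𝓑 = ∑ Δ i · log₂(N / Δ i) ≤ 3N`, where the gaps are `Δ i = r i − r (i−1)`. -/
theorem statement17 (N q : ℕ) (hN : 2 ≤ N) (hq : 1 ≤ q)
    (r : ℕ → ℕ) (hr0 : r 0 = 0) (hrq : r (q + 1) = N + 1)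
    (hmono : ∀ i, i ≤ q → r i < r (i + 1))
    (hnarrow : (r q : ℝ) - (r 1 : ℝ) ≤ (N : ℝ) / Real.logb 2 (N : ℝ)) :
    ∑ i ∈ Finset.Icc 1 (q + 1),
        ((r i - r (i - 1) : ℕ) : ℝ) *
          Real.logb 2 ((N : ℝ) / ((r i - r (i - 1) : ℕ) : ℝ)) ≤ 3 * (N : ℝ) := by
  have hNpos : (0:ℝ) < N := by positivity
  have hL : (1:ℝ) ≤ Real.logb 2 N := by
    have : Real.logb 2 2 ≤ Real.logb 2 N :=
      Real.logb_le_logb_of_le one_lt_two two_pos (by exact_mod_cast hN)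
    simpa [Real.logb_self_eq_one] using this
  set L := Real.logb 2 (N:ℝ) with hLdef
  have hstep : ∀ i, 1 ≤ i → i ≤ q + 1 → r (i - 1) + 1 ≤ r i := by
    intro i h1 h2
    have h3 := hmono (i - 1) (by omega)
    have h4 : i - 1 + 1 = i := by omega
    rw [h4] at h3
    omega
  have hΔ1 : ∀ i, 1 ≤ i → i ≤ q + 1 → (1:ℝ) ≤ ((r i - r (i-1) : ℕ) : ℝ) := by
    intro i h1 h2
    have h3 := hstep i h1 h2
    have h4 : 1 ≤ r i - r (i-1) := by omega
    exact_mod_cast h4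
  have hΔcast : ∀ i, 1 ≤ i → i ≤ q + 1 →
      ((r i - r (i-1) : ℕ) : ℝ) = (r i : ℝ) - (r (i-1) : ℝ) := by
    intro i h1 h2
    have := hstep i h1 h2
    have h3 : r (i-1) ≤ r i := by omega
    exact Nat.cast_sub h3
  -- telescoping of middle gaps
  have htel : ∑ i ∈ Finset.Icc 2 q, ((r i : ℝ) - (r (i-1) : ℝ))
      = (r q : ℝ) - (r 1 : ℝ) := by
    rw [← Finset.Ico_add_one_right_eq_Icc, Finset.sum_Ico_eq_sum_range]
    have h1 : q + 1 - 2 = q - 1 := by omega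
    rw [h1]
    have h2 : ∑ i ∈ Finset.range (q-1), ((r (2+i) : ℝ) - (r (2+i-1) : ℝ))
        = ∑ i ∈ Finset.range (q-1), ((r (i+1+1) : ℝ) - (r (i+1) : ℝ)) := by
      refine Finset.sum_congr rfl fun i _ => ?_
      have e1 : 2 + i = i + 1 + 1 := by omega
      have e2 : 2 + i - 1 = i + 1 := by omega
      rw [e2, e1]
    rw [h2, Finset.sum_range_sub (fun j => ((r (j+1) : ℝ)))]
    have hq1 : q - 1 + 1 = q := by omega
    rw [hq1]
  -- middle sum bound
  have hmid : ∑ i ∈ Finset.Icc 2 q,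
      ((r i - r (i-1) : ℕ) : ℝ) * Real.logb 2 ((N:ℝ) / ((r i - r (i-1) : ℕ) : ℝ))
      ≤ (N:ℝ) := by
    have h1 : ∀ i ∈ Finset.Icc 2 q,
        ((r i - r (i-1) : ℕ) : ℝ) * Real.logb 2 ((N:ℝ) / ((r i - r (i-1) : ℕ) : ℝ))
        ≤ ((r i : ℝ) - (r (i-1) : ℝ)) * L := by
      intro i hi
      rw [Finset.mem_Icc] at hi
      have hi1 : 1 ≤ i := by omega
      have hi2 : i ≤ q + 1 := by omega
      have hd1 := hΔ1 i hi1 hi2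
      have hdc := hΔcast i hi1 hi2
      rw [← hdc]
      have hlog : Real.logb 2 ((N:ℝ) / ((r i - r (i-1) : ℕ) : ℝ)) ≤ L := by
        rw [hLdef]
        apply Real.logb_le_logb_of_le one_lt_two (by positivity)
        calc (N:ℝ) / ((r i - r (i-1) : ℕ) : ℝ) ≤ (N:ℝ) / 1 := by
              apply div_le_div_of_nonneg_left hNpos.le (by linarith) hd1
          _ = N := div_one _
      exact mul_le_mul_of_nonneg_left hlog (by linarith)
    calc _ ≤ ∑ i ∈ Finset.Icc 2 q, ((r i : ℝ) - (r (i-1) : ℝ)) * L :=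
          Finset.sum_le_sum h1
      _ = ((r q : ℝ) - (r 1 : ℝ)) * L := by rw [← Finset.sum_mul, htel]
      _ ≤ ((N:ℝ) / L) * L := mul_le_mul_of_nonneg_right hnarrow (by linarith)
      _ = N := div_mul_cancel₀ _ (by linarith)
  -- split the sum
  have hsplit : Finset.Icc 1 (q+1) = insert 1 (insert (q+1) (Finset.Icc 2 q)) := by
    ext x
    simp only [Finset.mem_Icc, Finset.mem_insert]
    omega
  have hnm1 : (1:ℕ) ∉ insert (q+1) (Finset.Icc 2 q) := by
    simp only [Finset.mem_insert, Finset.mem_Icc]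
    omega
  have hnm2 : (q+1) ∉ Finset.Icc 2 q := by
    simp only [Finset.mem_Icc]; omega
  rw [hsplit, Finset.sum_insert hnm1, Finset.sum_insert hnm2]
  have hb1 : ((r 1 - r 0 : ℕ) : ℝ) * Real.logb 2 ((N:ℝ) / ((r 1 - r 0 : ℕ) : ℝ)) ≤ N := by
    have h := hΔ1 1 le_rfl (by omega)
    have h' : (1:ℝ) ≤ ((r 1 - r 0 : ℕ) : ℝ) := by exact_mod_cast h
    exact keybound17 _ _ hNpos (by linarith)
  have hb2 : ((r (q+1) - r (q+1-1) : ℕ) : ℝ) *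
      Real.logb 2 ((N:ℝ) / ((r (q+1) - r (q+1-1) : ℕ) : ℝ)) ≤ N :=
    keybound17 _ _ hNpos (by have := hΔ1 (q+1) (by omega) le_rfl; linarith)
  have e1 : (1:ℕ) - 1 = 0 := rfl
  rw [e1] at *
  linarith
end
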